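/- Let (a_n) be an arithmetic sequence with ratios q_n and x ∈ 𝕋 with canonical representation x = Σ c_n/a_n. Suppose supp(x) has positive upper natural density, is q-divergent, and there exist 0 < r₁ ≤ r₂ < 1 such that c_n/q_n ∈ [r₁, r₂] for all n ∈ supp(x). Then x is not a topological s-torsion element of 𝕋 (i.e., a_n x does not converge to 0 statistically). -/

import Mathlib

open Filter Topology Set

/-- Upper natural density of a set of naturals. -/
noncomputable def upperDensity (A : Set ℕ) : ℝ :=
  Filter.limsup (fun n => (Nat.card ↥(A ∩ Set.Iio n) : ℝ) / n) Filter.atTop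

/-- `A` has natural density `δ`. -/
def HasDensity (A : Set ℕ) (δ : ℝ) : Prop :=
  Filter.Tendsto (fun n => (Nat.card ↥(A ∩ Set.Iio n) : ℝ) / n) Filter.atTop (nhds δ)

/-- Statistical convergence of a real sequence. -/
def StatTendsto (x : ℕ → ℝ) (ξ : ℝ) : Prop :=
  ∀ ε : ℝ, 0 < ε → HasDensity {n | ε ≤ |x n - ξ|} 0

/-- An arithmetic sequence: `a 0 = 1 < a 1 < a 2 < ⋯` and `a n ∣ a (n+1)`. -/
def IsArithmeticSeq (a : ℕ → ℕ) : Prop :=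
  a 0 = 1 ∧ StrictMono a ∧ ∀ n, a n ∣ a (n + 1)

/-- The ratio `q n = a n / a (n-1)` as a real number. -/
noncomputable def qr (a : ℕ → ℕ) (n : ℕ) : ℝ := (a n : ℝ) / (a (n - 1) : ℝ)

/-- `(c n)` is a canonical representation sequence w.r.t. `(a n)`:
`0 ≤ c n < q n` and `c n < q n - 1` for infinitely many `n`. -/
def IsCanonicalRep (a : ℕ → ℕ) (c : ℕ → ℕ) : Prop :=
  c 0 = 0 ∧ (∀ n, 1 ≤ n → c n < a n / a (n - 1)) ∧
    (∀ N, ∃ n, N ≤ n ∧ 1 ≤ n ∧ c n + 1 < a n / a (n - 1))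

/-- Support of (the canonical representation of) `x`. -/
def suppRep (c : ℕ → ℕ) : Set ℕ := {n | 1 ≤ n ∧ c n ≠ 0}

/-- `supp_q(x) = {n : c n = q n - 1}`. -/
def suppqRep (a c : ℕ → ℕ) : Set ℕ := {n | 1 ≤ n ∧ c n + 1 = a n / a (n - 1)}

/-- A set `S ⊆ ℕ` is `q`-bounded if `(q n)` is bounded on `S`. -/
def QBounded (a : ℕ → ℕ) (S : Set ℕ) : Prop := ∃ M, ∀ n ∈ S, a n / a (n - 1) ≤ M

/-- A set `S ⊆ ℕ` is `q`-divergent if `q n → ∞` along `n ∈ S`. -/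
def QDivergent (a : ℕ → ℕ) (S : Set ℕ) : Prop :=
  Filter.Tendsto (fun n => a n / a (n - 1)) (Filter.atTop ⊓ Filter.principal S) Filter.atTop

/-- Statistical convergence in a topological space, via neighborhoods. -/
def StatNhdTendsto {α : Type*} [TopologicalSpace α] (y : ℕ → α) (ℓ : α) : Prop :=
  ∀ U ∈ nhds ℓ, HasDensity {n | y n ∉ U} 0


section AuxLemmas

variable {a c : ℕ → ℕ}

lemma aux_apos (ha : IsArithmeticSeq a) (n : ℕ) : 0 < a n := by
  rcases Nat.eq_zero_or_pos n with h | h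
  · simp [h, ha.1]
  · have h1 : a 0 < a n := ha.2.1 h
    omega

lemma aux_adiv (ha : IsArithmeticSeq a) {m n : ℕ} (h : m ≤ n) : a m ∣ a n := by
  induction n, h using Nat.le_induction with
  | base => exact dvd_rfl
  | succ k hk ih => exact ih.trans (ha.2.2 k)

lemma aux_two (ha : IsArithmeticSeq a) (n : ℕ) : 2 * a n ≤ a (n + 1) := by
  obtain ⟨d, hd⟩ := ha.2.2 n
  have h1 : a n < a (n + 1) := ha.2.1 (Nat.lt_succ_self n)
  have h0 : 0 < a n := aux_apos ha n
  have h2 : 2 ≤ d := by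
    by_contra h
    interval_cases d <;> simp_all <;> omega
  calc 2 * a n = a n * 2 := Nat.mul_comm _ _
    _ ≤ a n * d := Nat.mul_le_mul_left _ h2
    _ = a (n + 1) := hd.symm

lemma aux_pow (ha : IsArithmeticSeq a) (n : ℕ) : 2 ^ n ≤ a n := by
  induction n with
  | zero => simp [ha.1]
  | succ k ih =>
    calc 2 ^ (k + 1) = 2 * 2 ^ k := by ring
      _ ≤ 2 * a k := by omega
      _ ≤ a (k + 1) := aux_two ha k

lemma aux_qcast (ha : IsArithmeticSeq a) {n : ℕ} (hn : 1 ≤ n) :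
    ((a n / a (n - 1) : ℕ) : ℝ) = qr a n := by
  have hd : a (n - 1) ∣ a n := aux_adiv ha (by omega)
  have hne : ((a (n - 1) : ℕ) : ℝ) ≠ 0 := Nat.cast_ne_zero.mpr (aux_apos ha _).ne'
  rw [Nat.cast_div hd hne]; rfl

lemma aux_fle (ha : IsArithmeticSeq a) (hc : IsCanonicalRep a c) {n : ℕ} (hn : 1 ≤ n) :
    (c n : ℝ) / a n ≤ 1 / a (n - 1) - 1 / a n := by
  have hq := hc.2.1 n hn
  have hd : a (n - 1) ∣ a n := aux_adiv ha (by omega)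
  have h0 : (0 : ℝ) < a (n - 1) := by exact_mod_cast aux_apos ha _
  have h1 : (0 : ℝ) < a n := by exact_mod_cast aux_apos ha _
  have hmul : (a n / a (n - 1) : ℕ) * a (n - 1) = a n := Nat.div_mul_cancel hd
  have hcast : ((a n / a (n - 1) : ℕ) : ℝ) * (a (n - 1) : ℝ) = (a n : ℝ) := by
    exact_mod_cast congrArg (Nat.cast : ℕ → ℝ) hmul
  have hcle : (c n : ℝ) ≤ ((a n / a (n - 1) : ℕ) : ℝ) - 1 := by
    have h : (c n : ℕ) + 1 ≤ a n / a (n - 1) := hq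
    have := (Nat.cast_le (α := ℝ)).mpr h
    push_cast at this
    linarith
  have hqdiv : ((a n / a (n - 1) : ℕ) : ℝ) / (a n : ℝ) = 1 / (a (n - 1) : ℝ) := by
    rw [div_eq_div_iff h1.ne' h0.ne']
    linarith [hcast]
  calc (c n : ℝ) / a n ≤ (((a n / a (n - 1) : ℕ) : ℝ) - 1) / a n := by gcongr
    _ = ((a n / a (n - 1) : ℕ) : ℝ) / a n - 1 / a n := by rw [sub_div]
    _ = 1 / a (n - 1) - 1 / a n := by rw [hqdiv]

lemma aux_summable (ha : IsArithmeticSeq a) (hc : IsCanonicalRep a c) :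
    Summable (fun k => (c k : ℝ) / a k) := by
  apply Summable.of_nonneg_of_le (fun n => by positivity) _
    (summable_geometric_two.mul_left 2)
  intro n
  rcases Nat.eq_zero_or_pos n with h | h
  · simp [h, hc.1]
  · have h1 : (c n : ℝ) / a n ≤ 1 / a (n - 1) := by
      have := aux_fle ha hc h
      have h2 : (0 : ℝ) < a n := by exact_mod_cast aux_apos ha n
      have : (0:ℝ) ≤ 1 / (a n : ℝ) := by positivity
      linarith [aux_fle ha hc h]
    have h2 : (2 : ℝ) ^ (n - 1) ≤ a (n - 1) := by exact_mod_cast aux_pow ha (n - 1)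
    have h3 : (1 : ℝ) / a (n - 1) ≤ 1 / 2 ^ (n - 1) := by
      apply one_div_le_one_div_of_le (by positivity) h2
    have h4 : (1 : ℝ) / 2 ^ (n - 1) = 2 * (1 / 2) ^ n := by
      have hn : n - 1 + 1 = n := by omega
      rw [div_pow, one_pow]
      rw [show (2:ℝ) ^ n = 2 * 2 ^ (n - 1) by rw [← pow_succ']; rw [hn]]
      field_simp
    linarith

lemma aux_tail (ha : IsArithmeticSeq a) (hc : IsCanonicalRep a c) (n : ℕ) :
    (∑' k, (c (k + 1 + n) : ℝ) / a (k + 1 + n)) ≤ 1 / a n := by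
  have hf := aux_summable ha hc
  have hs : Summable (fun k => (c (k + 1 + n) : ℝ) / a (k + 1 + n)) := by
    have h := (summable_nat_add_iff (f := fun k => (c k : ℝ) / a k) (n + 1)).2 hf
    exact h.congr (fun k => by rw [show k + (n + 1) = k + 1 + n by omega])
  apply Summable.tsum_le_of_sum_range_le hs
  intro m
  have key : ∀ k, (c (k + 1 + n) : ℝ) / a (k + 1 + n)
      ≤ 1 / (a (k + n) : ℝ) - 1 / (a (k + 1 + n) : ℝ) := by
    intro k
    have h := aux_fle ha hc (n := k + 1 + n) (by omega)
    rwa [show k + 1 + n - 1 = k + n by omega] at h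
  calc ∑ k ∈ Finset.range m, (c (k + 1 + n) : ℝ) / a (k + 1 + n)
      ≤ ∑ k ∈ Finset.range m, (1 / (a (k + n) : ℝ) - 1 / (a (k + 1 + n) : ℝ)) :=
        Finset.sum_le_sum fun k _ => key k
    _ = 1 / (a (0 + n) : ℝ) - 1 / (a (m + n) : ℝ) :=
        Finset.sum_range_sub' (fun i => 1 / (a (i + n) : ℝ)) m
    _ ≤ 1 / a n := by
        have : (0:ℝ) ≤ 1 / (a (m + n) : ℝ) := by positivity
        rw [Nat.zero_add]
        linarith

lemma aux_norm_ge {y δ : ℝ} (hδ : 0 < δ) (h1 : δ ≤ y) (h2 : y ≤ 1 - δ) :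
    δ ≤ ‖((y : ℝ) : AddCircle (1 : ℝ))‖ := by
  rw [AddCircle.norm_eq]
  simp only [inv_one, one_mul, mul_one]
  rcases le_or_gt ((round y : ℤ) : ℝ) 0 with h | h
  · rw [abs_of_nonneg (by linarith)]
    linarith
  · have h3 : (1 : ℝ) ≤ ((round y : ℤ) : ℝ) := by exact_mod_cast h
    rw [abs_of_nonpos (by linarith)]
    linarith

lemma aux_count {S B : Set ℕ} {N : ℕ} (hS1 : ∀ n ∈ S, 1 ≤ n)
    (hN : ∀ n ∈ S, N ≤ n → n - 1 ∈ B) (m : ℕ) :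
    (S ∩ Set.Iio m).ncard ≤ N + (B ∩ Set.Iio m).ncard := by
  have hfin : (S ∩ Set.Iio m).Finite := Set.Finite.inter_of_right (Set.finite_Iio m) S
  have hfinB : (B ∩ Set.Iio m).Finite := Set.Finite.inter_of_right (Set.finite_Iio m) B
  set D := (S ∩ Set.Iio m) \ Set.Iio N with hD
  have hsplit : S ∩ Set.Iio m ⊆ Set.Iio N ∪ D := by
    intro n hn
    by_cases h : n < N
    · exact Or.inl h
    · exact Or.inr ⟨hn, h⟩
  have hIio : (Set.Iio N).ncard = N := by
    rw [show Set.Iio N = ↑(Finset.Iio N) by simp, Set.ncard_coe_finset, Nat.card_Iio]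
  have hinj : Set.InjOn (· - 1) D := by
    intro p hp q hq hpq
    have hp1 : 1 ≤ p := hS1 p hp.1.1
    have hq1 : 1 ≤ q := hS1 q hq.1.1
    simp only at hpq
    omega
  have himg : (· - 1) '' D ⊆ B ∩ Set.Iio m := by
    rintro _ ⟨n, hn, rfl⟩
    have h1 : n ∈ S := hn.1.1
    have h2 : n < m := hn.1.2
    have h3 : N ≤ n := by
      have := hn.2
      simp only [Set.mem_Iio] at this
      omega
    exact ⟨hN n h1 h3, by simp only [Set.mem_Iio]; omega⟩
  have hDle : D.ncard ≤ (B ∩ Set.Iio m).ncard := by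
    rw [← Set.ncard_image_of_injOn hinj]
    exact Set.ncard_le_ncard himg hfinB
  calc (S ∩ Set.Iio m).ncard ≤ (Set.Iio N ∪ D).ncard :=
        Set.ncard_le_ncard hsplit ((Set.finite_Iio N).union hfin.diff)
    _ ≤ (Set.Iio N).ncard + D.ncard := Set.ncard_union_le _ _
    _ ≤ N + (B ∩ Set.Iio m).ncard := by rw [hIio]; omega

end AuxLemmas

set_option maxHeartbeats 1000000 in
/-- If `supp(x)` has positive upper density, is `q`-divergent, and
`c_n/q_n ∈ [r₁, r₂] ⊆ (0,1)` on `supp(x)`, then `x` is not a topological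
`s`-torsion element of `𝕋`. -/
theorem not_sTorsion_of_cq_bounded_away (a c : ℕ → ℕ) (ha : IsArithmeticSeq a)
    (hc : IsCanonicalRep a c) (x : AddCircle (1 : ℝ))
    (hx : x = ((∑' n, (c n : ℝ) / (a n : ℝ) : ℝ) : AddCircle (1 : ℝ)))
    (hpos : 0 < upperDensity (suppRep c)) (hqd : QDivergent a (suppRep c))
    (r₁ r₂ : ℝ) (hr₁ : 0 < r₁) (hr₁₂ : r₁ ≤ r₂) (hr₂ : r₂ < 1)
    (hcq : ∀ n ∈ suppRep c, r₁ ≤ (c n : ℝ) / qr a n ∧ (c n : ℝ) / qr a n ≤ r₂) :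
    ¬ StatNhdTendsto (fun n => a n • x) (0 : AddCircle (1 : ℝ)) := by
  intro hstat
  have hf : Summable (fun k => (c k : ℝ) / a k) := aux_summable ha hc
  set δ : ℝ := min r₁ ((1 - r₂) / 2) with hδdef
  clear_value δ
  have hδ : 0 < δ := by rw [hδdef]; exact lt_min hr₁ (by linarith)
  have hδ1 : δ ≤ r₁ := by rw [hδdef]; exact min_le_left _ _
  have hδ2 : δ ≤ (1 - r₂) / 2 := by rw [hδdef]; exact min_le_right _ _
  have hU : Metric.ball (0 : AddCircle (1 : ℝ)) δ ∈ nhds 0 := Metric.ball_mem_nhds _ hδ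
  have hB := hstat _ hU
  set B : Set ℕ := {n | (fun n => a n • x) n ∉ Metric.ball (0 : AddCircle (1 : ℝ)) δ}
    with hBdef
  clear_value B
  obtain ⟨M, hM⟩ := exists_nat_ge (2 / (1 - r₂))
  have hev : ∀ᶠ n in atTop, n ∈ suppRep c → M ≤ a n / a (n - 1) :=
    eventually_inf_principal.mp (hqd.eventually (eventually_ge_atTop M))
  obtain ⟨N, hN⟩ := eventually_atTop.mp hev
  have hkey : ∀ n ∈ suppRep c, N ≤ n → n - 1 ∈ B := by
    intro n hnS hnN
    obtain ⟨hn1, hcne⟩ := hnS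
    have h0 : (0 : ℝ) < a (n - 1) := by exact_mod_cast aux_apos ha _
    have h1 : (0 : ℝ) < a n := by exact_mod_cast aux_apos ha _
    have hqcast := aux_qcast ha hn1
    have hqM : (M : ℝ) ≤ qr a n := by
      rw [← hqcast]; exact_mod_cast hN n hnN ⟨hn1, hcne⟩
    have hq2 : 2 / (1 - r₂) ≤ qr a n := le_trans hM hqM
    have hqpos : 0 < qr a n := div_pos h1 h0
    have h1q : 1 / qr a n ≤ (1 - r₂) / 2 := by
      have h2 : 2 ≤ qr a n * (1 - r₂) := by
        have := (div_le_iff₀ (by linarith : (0 : ℝ) < 1 - r₂)).mp hq2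
        linarith
      rw [div_le_div_iff₀ hqpos (by norm_num : (0 : ℝ) < 2)]
      nlinarith [h2]
    have hsplit := hf.sum_add_tsum_nat_add (f := fun k => (c k : ℝ) / a k) n
    set T : ℝ := ∑' k, (c (k + n) : ℝ) / a (k + n) with hT
    set S : ℝ := ∑ i ∈ Finset.range n, (c i : ℝ) / a i with hS
    clear_value T S
    -- the finite part times a (n-1) is an integer
    have hzint : ∃ z : ℤ, (z : ℝ) = (a (n - 1) : ℝ) * S := by
      have hreal : ((∑ i ∈ Finset.range n, c i * (a (n - 1) / a i) : ℕ) : ℝ)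
          = (a (n - 1) : ℝ) * S := by
        rw [Nat.cast_sum, hS, Finset.mul_sum]
        apply Finset.sum_congr rfl
        intro i hi
        have hi' : i ≤ n - 1 := by have := Finset.mem_range.mp hi; omega
        have hdvd : a i ∣ a (n - 1) := aux_adiv ha hi'
        have hia : ((a i : ℕ) : ℝ) ≠ 0 := Nat.cast_ne_zero.mpr (aux_apos ha _).ne'
        rw [Nat.cast_mul, Nat.cast_div hdvd hia]
        field_simp
      exact ⟨((∑ i ∈ Finset.range n, c i * (a (n - 1) / a i) : ℕ) : ℤ), by
        exact_mod_cast hreal⟩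
    have hzero : (((a (n - 1) : ℝ) * S : ℝ) : AddCircle (1 : ℝ)) = 0 := by
      obtain ⟨z, hz⟩ := hzint
      rw [AddCircle.coe_eq_zero_iff]
      exact ⟨z, by rw [zsmul_eq_mul, mul_one, hz]⟩
    have hxeq : a (n - 1) • x = (((a (n - 1) : ℝ) * T : ℝ) : AddCircle (1 : ℝ)) := by
      calc a (n - 1) • x = ((((a (n - 1) : ℕ) • (S + T) : ℝ)) : AddCircle (1 : ℝ)) := by
            rw [hx, ← hsplit, QuotientAddGroup.mk_nsmul]
        _ = (((a (n - 1) : ℝ) * S + (a (n - 1) : ℝ) * T : ℝ) : AddCircle (1 : ℝ)) := by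
            rw [nsmul_eq_mul, mul_add]
        _ = (((a (n - 1) : ℝ) * S : ℝ) : AddCircle (1 : ℝ))
              + (((a (n - 1) : ℝ) * T : ℝ) : AddCircle (1 : ℝ)) := AddCircle.coe_add _ _ _
        _ = (((a (n - 1) : ℝ) * T : ℝ) : AddCircle (1 : ℝ)) := by rw [hzero, zero_add]
    -- bounds on T
    have hsum_shift : Summable (fun k => (c (k + n) : ℝ) / a (k + n)) :=
      (summable_nat_add_iff n).2 hf
    have hTsplit : T = (c n : ℝ) / a n + ∑' k, (c (k + 1 + n) : ℝ) / a (k + 1 + n) := by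
      rw [hT, hsum_shift.tsum_eq_zero_add]
      simp only [Nat.zero_add]
    have htail := aux_tail ha hc n
    have htail0 : 0 ≤ ∑' k, (c (k + 1 + n) : ℝ) / a (k + 1 + n) :=
      tsum_nonneg fun k => by positivity
    have hfn_eq : (a (n - 1) : ℝ) * ((c n : ℝ) / a n) = (c n : ℝ) / qr a n := by
      unfold qr
      rw [div_div_eq_mul_div]
      ring
    have hinv_eq : 1 / qr a n = (a (n - 1) : ℝ) / a n := by
      unfold qr
      rw [one_div_div]
    obtain ⟨hcq1, hcq2⟩ := hcq n ⟨hn1, hcne⟩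
    have hTlow : r₁ ≤ (a (n - 1) : ℝ) * T := by
      have h4 : (c n : ℝ) / a n ≤ T := by rw [hTsplit]; linarith
      have h5 := mul_le_mul_of_nonneg_left h4 h0.le
      rw [hfn_eq] at h5
      linarith
    have hThigh : (a (n - 1) : ℝ) * T ≤ r₂ + 1 / qr a n := by
      have hTle : T ≤ (c n : ℝ) / a n + 1 / a n := by rw [hTsplit]; linarith
      have h2 : (a (n - 1) : ℝ) * T ≤ (a (n - 1) : ℝ) * ((c n : ℝ) / a n + 1 / a n) :=
        mul_le_mul_of_nonneg_left hTle h0.le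
      have h3 : (a (n - 1) : ℝ) * ((c n : ℝ) / a n + 1 / a n)
          = (c n : ℝ) / qr a n + 1 / qr a n := by
        rw [mul_add, hfn_eq, hinv_eq]; ring
      linarith
    have hylow : δ ≤ (a (n - 1) : ℝ) * T := by linarith
    have hyhigh : (a (n - 1) : ℝ) * T ≤ 1 - δ := by linarith
    have hnorm := aux_norm_ge hδ hylow hyhigh
    simp only [hBdef, Set.mem_setOf_eq]
    intro hmem
    rw [hxeq, mem_ball_zero_iff] at hmem
    linarith
  -- density contradiction
  have hS1 : ∀ n ∈ suppRep c, 1 ≤ n := fun n hn => hn.1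
  have hle : ∀ m : ℕ, (Nat.card ↥(suppRep c ∩ Set.Iio m) : ℝ) / m
      ≤ (N : ℝ) / m + (Nat.card ↥(B ∩ Set.Iio m) : ℝ) / m := by
    intro m
    rw [← add_div]
    have hm0 : (0 : ℝ) ≤ m := Nat.cast_nonneg m
    gcongr
    have hcnt := aux_count hS1 hkey m
    rw [Nat.card_coe_set_eq, Nat.card_coe_set_eq]
    exact_mod_cast hcnt
  have htend : Tendsto (fun m : ℕ => (N : ℝ) / m + (Nat.card ↥(B ∩ Set.Iio m) : ℝ) / m)
      atTop (nhds 0) := by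
    have h1 := tendsto_const_div_atTop_nhds_zero_nat (N : ℝ)
    have h2 : Tendsto (fun m : ℕ => (Nat.card ↥(B ∩ Set.Iio m) : ℝ) / m) atTop (nhds 0) := hB
    simpa using h1.add h2
  have hub : upperDensity (suppRep c) ≤ 0 := by
    have hcob : IsCoboundedUnder (· ≤ ·) atTop
        (fun m : ℕ => (Nat.card ↥(suppRep c ∩ Set.Iio m) : ℝ) / m) :=
      (isBoundedUnder_of ⟨0, fun m => by positivity⟩).isCoboundedUnder_le
    calc upperDensity (suppRep c)
        ≤ limsup (fun m : ℕ => (N : ℝ) / m + (Nat.card ↥(B ∩ Set.Iio m) : ℝ) / m) atTop :=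
          limsup_le_limsup (Eventually.of_forall hle) hcob htend.isBoundedUnder_le
      _ = 0 := htend.limsup_eq
  linarith
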